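/- Let x be a non-dirty candidate with respect to threshold 5/6 in an election with at most 6 candidates. Let r be a 3-wise median of the election such that every candidate z with z ≥_{5/6} x is ranked before x in r. Then for every candidate y ≠ x with x ≥_{5/6} y, x is ranked before y in r. -/

import Mathlib

open Finset

/-- A ranking (strict total order) of the finite candidate set `C`, encoded as a
bijection with `Fin (Fintype.card C)`; position `0` is the top of the ranking. -/
abbrev Ranking (C : Type*) [Fintype C] := C ≃ Fin (Fintype.card C)

section Defs

variable {C : Type*} [Fintype C] [DecidableEq C]

/-- `x` is ranked (strictly) before `y` in the ranking `π`. -/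
def Before (π : Ranking C) (x y : C) : Prop := π x < π y

instance (π : Ranking C) (x y : C) : Decidable (Before π x y) :=
  inferInstanceAs (Decidable (π x < π y))

instance : DecidableEq (Ranking C) := fun a b =>
  decidable_of_iff (∀ i, a i = b i) Equiv.ext_iff.symm

/-- The top-ranked element of `S ⊆ C` according to `π` (`⊤` if `S = ∅`). -/
def topS (π : Ranking C) (S : Finset C) : WithTop C :=
  (S.image π).min.map (fun i => π.symm i)

/-- The `k`-wise Kendall-tau distance between two rankings: the number of subsets
`S ⊆ C` with `|S| ≤ k` on whose top element the two rankings disagree (subsets of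
size at most one never contribute). -/
def kDist (k : ℕ) (π σ : Ranking C) : ℕ :=
  ((Finset.univ : Finset C).powerset.filter
    (fun S => S.card ≤ k ∧ topS π S ≠ topS σ S)).card

/-- The `k`-wise Kendall-tau distance from a ranking to a voting profile. -/
def kDistV (k : ℕ) (π : Ranking C) (V : Multiset (Ranking C)) : ℕ :=
  (V.map (fun σ => kDist k π σ)).sum

/-- `π` is a `k`-wise median (for `k = 2`: a Kemeny ranking) of the profile `V`. -/
def IsKMedian (k : ℕ) (V : Multiset (Ranking C)) (π : Ranking C) : Prop :=
  ∀ σ : Ranking C, kDistV k π V ≤ kDistV k σ V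

/-- The number of votes of `V` in which `x` is ranked before `y`. -/
def votesBefore (V : Multiset (Ranking C)) (x y : C) : ℕ :=
  Multiset.card (V.filter (fun v => Before v x y))

/-- `x ≥ₛ y` : `x` is ranked before `y` in at least `s·|V|` of the votes. -/
def AtLeastRatio (V : Multiset (Ranking C)) (s : ℝ) (x y : C) : Prop :=
  s * (Multiset.card V : ℝ) ≤ (votesBefore V x y : ℝ)

/-- `x >ₛ y` : `x` is ranked before `y` in more than `s·|V|` of the votes. -/
def MoreThanRatio (V : Multiset (Ranking C)) (s : ℝ) (x y : C) : Prop :=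
  s * (Multiset.card V : ℝ) < (votesBefore V x y : ℝ)

noncomputable instance (V : Multiset (Ranking C)) (s : ℝ) (x y : C) :
    Decidable (AtLeastRatio V s x y) :=
  inferInstanceAs (Decidable (s * (Multiset.card V : ℝ) ≤ (votesBefore V x y : ℝ)))

/-- `x` is a non-dirty candidate w.r.t. threshold `s`. -/
def NonDirty (V : Multiset (Ranking C)) (s : ℝ) (x : C) : Prop :=
  ∀ y : C, y ≠ x → AtLeastRatio V s x y ∨ AtLeastRatio V s y x

/-- `x` is ranked first (is the winner) in the ranking `π`. -/
def RankedFirst (π : Ranking C) (x : C) : Prop :=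
  ∀ y : C, y ≠ x → Before π x y

instance (π : Ranking C) (x : C) : Decidable (RankedFirst π x) :=
  inferInstanceAs (Decidable (∀ y : C, y ≠ x → Before π x y))

end Defs

section Helpers

set_option linter.unusedSectionVars false

variable {C : Type*} [Fintype C] [DecidableEq C]

/-! ### counting helpers -/

section Cnt
variable {α : Type*} (W : Multiset α) (P Q R : α → Prop)
  [DecidablePred P] [DecidablePred Q] [DecidablePred R]

lemma cnt_mono (h : ∀ v, P v → Q v) :
    Multiset.card (W.filter P) ≤ Multiset.card (W.filter Q) := by
  induction W using Multiset.induction with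
  | empty => simp
  | cons a s ih =>
    by_cases hP : P a <;> by_cases hQ : Q a <;>
      simp [Multiset.filter_cons, hP, hQ] <;> first | omega | exact (hQ (h a hP)).elim

lemma cnt_add_not :
    Multiset.card (W.filter P) + Multiset.card (W.filter (fun v => ¬ P v)) = Multiset.card W := by
  induction W using Multiset.induction with
  | empty => simp
  | cons a s ih => by_cases hP : P a <;> simp [Multiset.filter_cons, hP] <;> omega

lemma cnt_le_or (h : ∀ v, P v → Q v ∨ R v) :
    Multiset.card (W.filter P) ≤ Multiset.card (W.filter Q) + Multiset.card (W.filter R) := by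
  induction W using Multiset.induction with
  | empty => simp
  | cons a s ih =>
    by_cases hP : P a <;> by_cases hQ : Q a <;> by_cases hR : R a <;>
      simp [Multiset.filter_cons, hP, hQ, hR] <;> first | omega | rcases h a hP with h'|h' <;> tauto

lemma cnt_cover (h : ∀ v, P v ∨ Q v ∨ R v) :
    Multiset.card W ≤ Multiset.card (W.filter P) + Multiset.card (W.filter Q)
      + Multiset.card (W.filter R) := by
  induction W using Multiset.induction with
  | empty => simp
  | cons a s ih =>
    by_cases hP : P a <;> by_cases hQ : Q a <;> by_cases hR : R a <;>
      simp [Multiset.filter_cons, hP, hQ, hR] <;>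
        first | omega | (exact absurd (h a) (by tauto))

lemma cnt_congr (h : ∀ v, P v ↔ Q v) :
    Multiset.card (W.filter P) = Multiset.card (W.filter Q) := by
  rw [Multiset.filter_congr (fun x _ => h x)]
end Cnt

/-! ### order helpers -/

lemma before_total (v : Ranking C) {a b : C} (hab : a ≠ b) :
    Before v a b ∨ Before v b a := by
  rcases lt_trichotomy (v a) (v b) with h|h|h
  · exact Or.inl h
  · exact absurd (v.injective h) hab
  · exact Or.inr h

lemma before_or (v : Ranking C) {a b c : C} (hab : a ≠ b) (h : Before v a c) :
    Before v a b ∨ Before v b c := by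
  by_cases h1 : Before v a b
  · exact Or.inl h1
  · rcases before_total v hab with h2|h2
    · exact absurd h2 h1
    · exact Or.inr (lt_trans h2 h)

lemma cover_trans (v : Ranking C) {c x y : C} (hcx : c ≠ x) (hyx : y ≠ x) :
    (Before v c y ∧ Before v c x) ∨ Before v x c ∨ Before v y x := by
  by_cases h1 : Before v x c
  · exact Or.inr (Or.inl h1)
  by_cases h2 : Before v y x
  · exact Or.inr (Or.inr h2)
  have hcx' : Before v c x := (before_total v hcx).resolve_right h1
  have hxy : Before v x y := (before_total v (Ne.symm hyx)).resolve_right h2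
  exact Or.inl ⟨lt_trans hcx' hxy, hcx'⟩

lemma cover_plain (v : Ranking C) {a b c : C} (hab : a ≠ b) (hac : a ≠ c) :
    (Before v a b ∧ Before v a c) ∨ Before v b a ∨ Before v c a := by
  by_cases h1 : Before v b a
  · exact Or.inr (Or.inl h1)
  by_cases h2 : Before v c a
  · exact Or.inr (Or.inr h2)
  exact Or.inl ⟨(before_total v hab).resolve_right h1, (before_total v hac).resolve_right h2⟩

/-! ### votesBefore helpers -/

lemma vb_add (V : Multiset (Ranking C)) {a b : C} (hab : a ≠ b) :
    votesBefore V a b + votesBefore V b a = Multiset.card V := by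
  unfold votesBefore
  have h : ∀ v : Ranking C, Before v b a ↔ ¬ Before v a b := by
    intro v
    constructor
    · intro h1 h2; exact absurd (lt_trans h1 h2) (lt_irrefl _)
    · intro h1; exact (before_total v hab).resolve_left h1
  rw [cnt_congr _ _ _ h]
  exact cnt_add_not V _

lemma ratio_bound (V : Multiset (Ranking C)) {a b : C} (hab : a ≠ b)
    (h : AtLeastRatio V (5 / 6) a b) :
    6 * votesBefore V b a ≤ Multiset.card V := by
  have hsum := vb_add V hab
  unfold AtLeastRatio at h
  have h1 : (votesBefore V a b : ℝ) + votesBefore V b a = Multiset.card V := by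
    exact_mod_cast congrArg (Nat.cast : ℕ → ℝ) hsum
  have h2 : ((6 * votesBefore V b a : ℕ) : ℝ) ≤ (Multiset.card V : ℝ) := by
    push_cast; linarith
  exact_mod_cast h2

/-! ### topS helpers -/

lemma topS_eq_iff (π : Ranking C) {S : Finset C} {a : C} (ha : a ∈ S) :
    topS π S = ↑a ↔ ∀ b ∈ S, π a ≤ π b := by
  obtain ⟨m, hm⟩ := Finset.min_of_mem (mem_image_of_mem π ha)
  have hma : m ≤ π a := Finset.min_le_of_eq (mem_image_of_mem π ha) hm
  unfold topS
  rw [hm]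
  simp only [WithTop.map_coe, WithTop.coe_inj]
  constructor
  · intro h b hb
    have : π a = m := by rw [← h]; simp
    exact this ▸ Finset.min_le_of_eq (mem_image_of_mem π hb) hm
  · intro h
    obtain ⟨c, hc, hcm⟩ := Finset.mem_image.mp (Finset.mem_of_min hm)
    have : π a ≤ m := hcm ▸ h c hc
    have ham : m = π a := le_antisymm hma this
    rw [ham]; simp

lemma topS_pair {a b : C} (hab : a ≠ b) (v : Ranking C) :
    topS v {a, b} = ↑a ↔ Before v a b := by
  rw [topS_eq_iff v (by simp : a ∈ ({a,b} : Finset C))]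
  constructor
  · intro h
    exact lt_of_le_of_ne (h b (by simp))
      (fun he => hab (v.injective (Fin.ext (congrArg Fin.val he))))
  · intro h c hc
    rcases Finset.mem_insert.mp hc with rfl | hc
    · exact le_refl _
    · simp only [Finset.mem_singleton] at hc; subst hc; exact le_of_lt h

lemma topS_triple {a b c : C} (hab : a ≠ b) (hac : a ≠ c) (v : Ranking C) :
    topS v {a, b, c} = ↑a ↔ Before v a b ∧ Before v a c := by
  rw [topS_eq_iff v (by simp : a ∈ ({a,b,c} : Finset C))]
  constructor
  · intro h
    refine ⟨lt_of_le_of_ne (h b (by simp)) (fun he => hab (v.injective (by exact_mod_cast he))),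
      lt_of_le_of_ne (h c (by simp)) (fun he => hac (v.injective (by exact_mod_cast he)))⟩
  · rintro ⟨h1, h2⟩ d hd
    simp only [Finset.mem_insert, Finset.mem_singleton] at hd
    rcases hd with rfl | rfl | rfl
    · exact le_refl _
    · exact le_of_lt h1
    · exact le_of_lt h2

lemma triple_rot {a b c : C} : ({a,b,c} : Finset C) = {c,a,b} := by
  ext e; simp only [Finset.mem_insert, Finset.mem_singleton]; tauto

lemma triple_swap {a b c : C} : ({a,b,c} : Finset C) = {b,a,c} := by
  ext e; simp only [Finset.mem_insert, Finset.mem_singleton]; tauto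

/-! ### count-vs-top helpers -/

lemma f_pair (V : Multiset (Ranking C)) (π : Ranking C) {a b : C} (hab : a ≠ b)
    (htop : Before π a b) :
    Multiset.card (V.filter (fun v => topS π {a,b} ≠ topS v {a,b})) + votesBefore V a b
      = Multiset.card V := by
  have h1 : topS π {a,b} = ↑a := (topS_pair hab π).mpr htop
  have h2 : Multiset.card (V.filter (fun v => topS π {a,b} ≠ topS v {a,b}))
      = Multiset.card (V.filter (fun v => ¬ (Before v a b))) := by
    apply cnt_congr
    intro v
    rw [h1, ← topS_pair hab v, ne_comm]
  rw [h2]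
  unfold votesBefore
  rw [Nat.add_comm]
  exact cnt_add_not V _

lemma f_triple (V : Multiset (Ranking C)) (π : Ranking C) {a b c : C} (hab : a ≠ b)
    (hac : a ≠ c) (h1 : Before π a b) (h2 : Before π a c) :
    Multiset.card (V.filter (fun v => topS π {a,b,c} ≠ topS v {a,b,c}))
      + Multiset.card (V.filter (fun v => Before v a b ∧ Before v a c))
      = Multiset.card V := by
  have ht : topS π {a,b,c} = ↑a := (topS_triple hab hac π).mpr ⟨h1, h2⟩
  have h3 : Multiset.card (V.filter (fun v => topS π {a,b,c} ≠ topS v {a,b,c}))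
      = Multiset.card (V.filter (fun v => ¬ (Before v a b ∧ Before v a c))) := by
    apply cnt_congr
    intro v
    rw [ht, ← topS_triple hab hac v, ne_comm]
  rw [h3, Nat.add_comm]
  exact cnt_add_not V _

/-! ### the modified ranking -/

/-- move `y` down to the position of `x`, shifting candidates in between up one. -/
def movedFun (r : Ranking C) (y x : C) (c : C) : Fin (Fintype.card C) :=
  if c = y then r x
  else if r y < r c ∧ r c ≤ r x then ⟨(r c).val - 1, (Nat.sub_le _ _).trans_lt (r c).isLt⟩
  else r c

lemma movedFun_injective (r : Ranking C) (y x : C) (hyx : r y < r x) :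
    Function.Injective (movedFun r y x) := by
  intro c d h
  have hveq : ∀ a b : C, (r a).val = (r b).val → a = b := fun a b he => r.injective (Fin.ext he)
  unfold movedFun at h
  have hij : (r y).val < (r x).val := hyx
  simp only [Fin.lt_def, Fin.le_def] at h
  split_ifs at h with h1 h2 h3 h4 h5 h6 h7 h8
  all_goals (rw [Fin.ext_iff] at h; try simp only [Fin.val_mk] at h)
  · rw [h1, h2]
  · exfalso; omega
  · exfalso
    have hd : d = x := (hveq x d h).symm
    rw [hd] at h3; simp only [not_and, not_lt, not_le] at h3; omega
  · exfalso; omega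
  · exact hveq c d (by omega)
  · exfalso
    have hdy : (r d).val ≠ (r y).val := fun he => h5 (hveq d y he)
    simp only [not_and, not_lt, not_le] at h6; omega
  · exfalso
    have hc : c = x := hveq c x h
    rw [hc] at h4; simp only [not_and, not_lt, not_le] at h4; omega
  · exfalso
    have hcy : (r c).val ≠ (r y).val := fun he => h1 (hveq c y he)
    simp only [not_and, not_lt, not_le] at h4; omega
  · exact hveq c d h

noncomputable def moved (r : Ranking C) (y x : C) (h : r y < r x) : Ranking C :=
  Equiv.ofBijective (movedFun r y x)
    ((Fintype.bijective_iff_injective_and_card _).mpr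
      ⟨movedFun_injective r y x h, by simp⟩)

variable {r : Ranking C} {y x : C} (hyx : r y < r x)

lemma moved_apply (c : C) : moved r y x hyx c = movedFun r y x c := rfl

lemma moved_self : moved r y x hyx y = r x := by
  rw [moved_apply]; unfold movedFun; simp

lemma moved_mid {c : C} (hc : c ≠ y) (h1 : r y < r c) (h2 : r c ≤ r x) :
    (moved r y x hyx c).val = (r c).val - 1 := by
  rw [moved_apply]; unfold movedFun; rw [if_neg hc, if_pos ⟨h1, h2⟩]

lemma moved_other {c : C} (hc : c ≠ y) (h : ¬(r y < r c ∧ r c ≤ r x)) :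
    moved r y x hyx c = r c := by
  rw [moved_apply]; unfold movedFun; rw [if_neg hc, if_neg h]

lemma moved_lt_iff {c d : C} (hc : c ≠ y) (hd : d ≠ y) :
    moved r y x hyx c < moved r y x hyx d ↔ r c < r d := by
  have hij : (r y).val < (r x).val := hyx
  have hcy : (r c).val ≠ (r y).val := fun he => hc (r.injective (Fin.ext he))
  have hdy : (r d).val ≠ (r y).val := fun he => hd (r.injective (Fin.ext he))
  rw [moved_apply, moved_apply]; unfold movedFun
  rw [if_neg hc, if_neg hd]
  simp only [Fin.lt_def, Fin.le_def]
  split_ifs with H1 H2 H2 <;> simp only [Fin.val_mk, Fin.lt_def] <;>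
    simp -failIfUnchanged only [not_and, not_lt, not_le] at * <;> omega

/-- sets whose top is unaffected by the move -/
lemma tops_eq (S : Finset C)
    (h : ¬ (y ∈ S ∧ (∀ c ∈ S, c ≠ y → r y < r c) ∧ ∃ c ∈ S, r y < r c ∧ r c ≤ r x)) :
    topS (moved r y x hyx) S = topS r S := by
  rcases S.eq_empty_or_nonempty with rfl | hS
  · rfl
  obtain ⟨a, ha, hmin⟩ := S.exists_min_image r hS
  rw [(topS_eq_iff r ha).mpr hmin]
  by_cases hay : a = y
  · subst hay
    push_neg at h
    have h2 : ∀ c ∈ S, c ≠ a → r a < r c := fun c hc hca =>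
      lt_of_le_of_ne (hmin c hc) (fun he => hca (r.injective he.symm))
    have h3 := h ha h2
    rw [topS_eq_iff (moved r a x hyx) ha]
    intro b hb
    by_cases hba : b = a
    · subst hba; exact le_refl _
    · have hab' : r a < r b := h2 b hb hba
      have hbx : r x < r b := h3 b hb hab'
      have := moved_other hyx hba (by rw [not_and_or]; right; exact not_le.mpr hbx)
      rw [moved_self hyx, this]
      exact le_of_lt hbx
  · rw [topS_eq_iff (moved r y x hyx) ha]
    intro b hb
    by_cases hby : b = y
    · subst hby
      have haly : r a < r b := lt_of_le_of_ne (hmin b hb) (fun he => hay (r.injective he))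
      have hne : ¬ (r b < r a ∧ r a ≤ r x) := fun hh => absurd haly (not_lt.mpr (le_of_lt hh.1))
      rw [moved_self hyx, moved_other hyx hay hne]
      exact le_of_lt (lt_trans haly hyx)
    · rcases eq_or_ne b a with rfl | hba
      · exact le_refl _
      · exact le_of_lt ((moved_lt_iff hyx hay hby).mpr
          (lt_of_le_of_ne (hmin b hb) (fun he => hba (r.injective he.symm))))

/-! ### the distance as a sum over small sets -/

lemma kDist_eq (k : ℕ) (π σ : Ranking C) :
    kDist k π σ = ∑ S ∈ (Finset.univ : Finset C).powerset.filter (fun S => S.card ≤ k),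
      if topS π S ≠ topS σ S then 1 else 0 := by
  unfold kDist
  rw [← Finset.filter_filter, Finset.card_filter]

lemma kDistV_eq (k : ℕ) (π : Ranking C) (V : Multiset (Ranking C)) :
    kDistV k π V = ∑ S ∈ (Finset.univ : Finset C).powerset.filter (fun S => S.card ≤ k),
      Multiset.card (V.filter (fun v => topS π S ≠ topS v S)) := by
  unfold kDistV
  induction V using Multiset.induction with
  | empty => simp
  | cons a s ih =>
    simp only [Multiset.map_cons, Multiset.sum_cons, ih, Multiset.filter_cons]
    rw [kDist_eq, ← Finset.sum_add_distrib]
    refine Finset.sum_congr rfl (fun S _ => ?_)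
    by_cases h : topS π S ≠ topS a S <;> simp [h] <;> omega

end Helpers

lemma arith_aux (p q k N : ℕ) (h1 : k + q.choose 2 = (p + q).choose 2)
    (h2 : p + q + 2 ≤ N) (h3 : N ≤ 6) : 2 * k < 4 + 2 * p + 3 * (p + q) := by
  have hp : p ≤ 4 := by omega
  have hq : q ≤ 4 := by omega
  interval_cases p <;> interval_cases q <;> simp_all [Nat.choose] <;> omega

set_option maxHeartbeats 1000000 in
/-- $5/6$-majority rule for elections with at most 6 candidates. -/
theorem stmt18 {C : Type*} [Fintype C] [DecidableEq C]
    (hn : Fintype.card C ≤ 6)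
    (V : Multiset (Ranking C)) (hV : V ≠ 0)
    (x : C) (hx : NonDirty V (5 / 6) x)
    (r : Ranking C) (hr : IsKMedian 3 V r)
    (hzx : ∀ z : C, AtLeastRatio V (5 / 6) z x → Before r z x) :
    ∀ y : C, y ≠ x → AtLeastRatio V (5 / 6) x y → Before r x y := by
  classical
  intro y0 hy0x hxy0
  by_contra hnb
  have hy0r : Before r y0 x := (before_total r (Ne.symm hy0x)).resolve_left hnb
  have hnpos : 0 < Multiset.card V := Multiset.card_pos.mpr hV
  obtain ⟨y, hyBad, hymax⟩ :=
    (univ.filter (fun c => c ≠ x ∧ AtLeastRatio V (5/6) x c ∧ Before r c x)).exists_max_image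
      r ⟨y0, by simp only [mem_filter, mem_univ, true_and]; exact ⟨hy0x, hxy0, hy0r⟩⟩
  simp only [mem_filter, mem_univ, true_and] at hyBad
  obtain ⟨hyx, hxy, hryx⟩ := hyBad
  have hmax : ∀ c, c ≠ x → AtLeastRatio V (5/6) x c → Before r c x → r c ≤ r y :=
    fun c h1 h2 h3 => hymax c (by simp only [mem_filter, mem_univ, true_and]; exact ⟨h1, h2, h3⟩)
  -- the two blocks of candidates below y
  set A : Finset C := univ.filter (fun c => r y < r c ∧ r c < r x) with hA_def
  set B : Finset C := univ.filter (fun c => r x < r c) with hB_def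
  have hmemA : ∀ z, z ∈ A ↔ (r y < r z ∧ r z < r x) := fun z => by
    rw [hA_def]; simp
  have hmemB : ∀ w, w ∈ B ↔ r x < r w := fun w => by rw [hB_def]; simp
  have hb1 : 6 * votesBefore V y x ≤ Multiset.card V := ratio_bound V (Ne.symm hyx) hxy
  have hAfacts : ∀ z ∈ A, z ≠ x ∧ z ≠ y ∧ 6 * votesBefore V x z ≤ Multiset.card V := by
    intro z hz
    rw [hmemA] at hz
    have hzx' : z ≠ x := fun he => absurd hz.2 (by rw [he]; exact lt_irrefl _)
    have hzy : z ≠ y := fun he => absurd hz.1 (by rw [he]; exact lt_irrefl _)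
    refine ⟨hzx', hzy, ?_⟩
    rcases hx z hzx' with h | h
    · exact absurd (hmax z hzx' h hz.2) (not_le.mpr hz.1)
    · exact ratio_bound V hzx' h
  have hBfacts : ∀ w ∈ B, w ≠ x ∧ w ≠ y ∧ r y < r w ∧ 6 * votesBefore V w x ≤ Multiset.card V := by
    intro w hw
    rw [hmemB] at hw
    have hwx : w ≠ x := fun he => absurd hw (by rw [he]; exact lt_irrefl _)
    have hyw : r y < r w := lt_trans hryx hw
    have hwy : w ≠ y := fun he => absurd hyw (by rw [he]; exact lt_irrefl _)
    refine ⟨hwx, hwy, hyw, ?_⟩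
    rcases hx w hwx with h | h
    · exact ratio_bound V (Ne.symm hwx) h
    · exact absurd (hzx w h) (lt_asymm hw)
  have hAB : ∀ c ∈ A ∪ B, c ≠ x ∧ c ≠ y ∧ r y < r c := by
    intro c hc
    rcases Finset.mem_union.mp hc with h | h
    · have h' := hAfacts c h
      have hm := (hmemA c).mp h
      exact ⟨h'.1, h'.2.1, hm.1⟩
    · have h' := hBfacts c h
      exact ⟨h'.1, h'.2.1, h'.2.2.1⟩
  -- the modified ranking
  set r' := moved r y x hryx with hr'_def
  have hpy : r' y = r x := moved_self hryx
  have hpx : (r' x).val = (r x).val - 1 := moved_mid hryx (Ne.symm hyx) hryx (le_refl _)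
  have hvyx : (r y).val < (r x).val := hryx
  have hpz : ∀ z ∈ A, (r' z).val = (r z).val - 1 := by
    intro z hz
    have h1 := (hAfacts z hz).2.1
    rw [hmemA] at hz
    exact moved_mid hryx h1 hz.1 (le_of_lt hz.2)
  have hpw : ∀ w ∈ B, r' w = r w := by
    intro w hw
    have h1 := (hBfacts w hw).2.1
    rw [hmemB] at hw
    exact moved_other hryx h1 (by rw [not_and_or]; right; exact not_le.mpr hw)
  have hbxy : Before r' x y := by
    show r' x < r' y
    rw [Fin.lt_def, hpy, hpx]; omega
  have hbzy : ∀ z ∈ A, Before r' z y := by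
    intro z hz
    have h2 := hpz z hz
    have hm := (hmemA z).mp hz
    have hm1 : (r y).val < (r z).val := hm.1
    have hm2 : (r z).val < (r x).val := hm.2
    show r' z < r' y
    rw [Fin.lt_def, hpy, h2]; omega
  have hbzx : ∀ z ∈ A, Before r' z x := by
    intro z hz
    have h2 := hpz z hz
    have hm := (hmemA z).mp hz
    have hm1 : (r y).val < (r z).val := hm.1
    have hm2 : (r z).val < (r x).val := hm.2
    show r' z < r' x
    rw [Fin.lt_def, hpx, h2]; omega
  have hbxw : ∀ w ∈ B, Before r' x w := by
    intro w hw
    have h2 := hpw w hw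
    have hm : (r x).val < (r w).val := (hmemB w).mp hw
    show r' x < r' w
    rw [Fin.lt_def, hpx, h2]; omega
  -- the pieces of the changed family
  set T4 := (A ∪ B).powersetCard 2 \ B.powersetCard 2 with hT4_def
  have hT4m : ∀ T ∈ T4, T.card = 2 ∧ T ⊆ A ∪ B ∧ ∃ z ∈ T, z ∈ A := by
    intro T hT
    obtain ⟨h1, h2⟩ := Finset.mem_sdiff.mp hT
    obtain ⟨hsub, hcard⟩ := Finset.mem_powersetCard.mp h1
    refine ⟨hcard, hsub, ?_⟩
    by_contra hno
    push_neg at hno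
    apply h2
    rw [Finset.mem_powersetCard]
    refine ⟨fun t ht => ?_, hcard⟩
    rcases Finset.mem_union.mp (hsub ht) with h | h
    · exact absurd h (hno t ht)
    · exact h
  set Q1 : Finset (Finset C) := {({y, x} : Finset C)} with hQ1_def
  set Q2 := A.image (fun z => ({y, z} : Finset C)) with hQ2_def
  set Q3 := (A ∪ B).image (fun c => ({y, x, c} : Finset C)) with hQ3_def
  set Q4 := T4.image (insert y) with hQ4_def
  set Cs := Q1 ∪ Q2 ∪ Q3 ∪ Q4 with hCs_def
  -- membership invariants
  have hQ1m : ∀ S ∈ Q1, x ∈ S ∧ S.card = 2 := by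
    intro S hS
    rw [hQ1_def, Finset.mem_singleton] at hS
    subst hS
    exact ⟨by simp, Finset.card_pair hyx⟩
  have hQ2m : ∀ S ∈ Q2, x ∉ S ∧ S.card = 2 := by
    intro S hS
    rw [hQ2_def] at hS
    obtain ⟨z, hz, rfl⟩ := Finset.mem_image.mp hS
    obtain ⟨hzx', hzy, -⟩ := hAfacts z hz
    constructor
    · intro hxS
      rcases Finset.mem_insert.mp hxS with h | h
      · exact hyx h.symm
      · exact hzx' (Finset.mem_singleton.mp h).symm
    · exact Finset.card_pair (Ne.symm hzy)
  have hQ3m : ∀ S ∈ Q3, x ∈ S ∧ S.card = 3 := by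
    intro S hS
    rw [hQ3_def] at hS
    obtain ⟨c, hc, rfl⟩ := Finset.mem_image.mp hS
    obtain ⟨hcx, hcy, -⟩ := hAB c hc
    refine ⟨by simp, ?_⟩
    rw [Finset.card_insert_of_notMem (by simp [hyx, Ne.symm hcy]),
      Finset.card_pair (Ne.symm hcx)]
  have hQ4m : ∀ S ∈ Q4, x ∉ S ∧ S.card = 3 := by
    intro S hS
    rw [hQ4_def] at hS
    obtain ⟨T, hT, rfl⟩ := Finset.mem_image.mp hS
    obtain ⟨hc2, hsub, -⟩ := hT4m T hT
    have hyT : y ∉ T := fun hm => (hAB y (hsub hm)).2.1 rfl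
    constructor
    · intro hxS
      rcases Finset.mem_insert.mp hxS with h | h
      · exact hyx h.symm
      · exact (hAB x (hsub h)).1 rfl
    · rw [Finset.card_insert_of_notMem hyT, hc2]
  have hCsub : Cs ⊆ (Finset.univ : Finset C).powerset.filter (fun S => S.card ≤ 3) := by
    intro S hS
    rw [Finset.mem_filter]
    refine ⟨Finset.mem_powerset.mpr (Finset.subset_univ S), ?_⟩
    rw [hCs_def] at hS
    rcases Finset.mem_union.mp hS with hS | hS4
    rcases Finset.mem_union.mp hS with hS | hS3
    rcases Finset.mem_union.mp hS with hS1 | hS2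
    · rw [(hQ1m S hS1).2]; omega
    · rw [(hQ2m S hS2).2]; omega
    · rw [(hQ3m S hS3).2]
    · rw [(hQ4m S hS4).2]
  -- every set whose top changes lies in the family Cs
  have hchanged : ∀ S ∈ (Finset.univ : Finset C).powerset.filter (fun S => S.card ≤ 3),
      topS r' S ≠ topS r S → S ∈ Cs := by
    intro S hSS hne
    have hch : y ∈ S ∧ (∀ c ∈ S, c ≠ y → r y < r c) ∧ ∃ c ∈ S, r y < r c ∧ r c ≤ r x := by
      by_contra hcon
      exact hne (by rw [hr'_def]; exact tops_eq hryx S hcon)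
    obtain ⟨hyS, hall, c0, hc0S, hc01, hc02⟩ := hch
    have hc0y : c0 ≠ y := fun he => absurd hc01 (by rw [he]; exact lt_irrefl _)
    have hyT : y ∉ S.erase y := Finset.notMem_erase y S
    have hins : insert y (S.erase y) = S := Finset.insert_erase hyS
    have hTmem : ∀ c ∈ S.erase y, c ≠ y ∧ r y < r c := fun c hc =>
      ⟨(Finset.mem_erase.mp hc).1,
        hall c (Finset.mem_erase.mp hc).2 (Finset.mem_erase.mp hc).1⟩
    have hc0T : c0 ∈ S.erase y := Finset.mem_erase.mpr ⟨hc0y, hc0S⟩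
    have hclass : ∀ c ∈ S.erase y, c = x ∨ c ∈ A ∪ B := by
      intro c hc
      rcases lt_trichotomy (r c) (r x) with h | h | h
      · right; apply Finset.mem_union_left; rw [hmemA]; exact ⟨(hTmem c hc).2, h⟩
      · left; exact r.injective h
      · right; apply Finset.mem_union_right; rw [hmemB]; exact h
    have hScard : S.card ≤ 3 := (Finset.mem_filter.mp hSS).2
    have hTcard : (S.erase y).card + 1 = S.card := by
      rw [Finset.card_erase_of_mem hyS]
      have := Finset.card_pos.mpr ⟨y, hyS⟩
      omega
    have hT1 : 1 ≤ (S.erase y).card := Finset.card_pos.mpr ⟨c0, hc0T⟩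
    rcases (by omega : (S.erase y).card = 1 ∨ (S.erase y).card = 2) with hcd | hcd
    · obtain ⟨c, hc'⟩ := Finset.card_eq_one.mp hcd
      have hcc0 : c0 = c := by rw [hc'] at hc0T; exact Finset.mem_singleton.mp hc0T
      subst hcc0
      have hSeq : S = {y, c0} := by rw [← hins, hc']
      rcases eq_or_lt_of_le hc02 with he | hlt
      · have hc0x : c0 = x := r.injective he
        subst hc0x
        rw [hCs_def]
        apply Finset.mem_union_left; apply Finset.mem_union_left; apply Finset.mem_union_left
        rw [hQ1_def, Finset.mem_singleton]
        exact hSeq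
      · rw [hCs_def]
        apply Finset.mem_union_left; apply Finset.mem_union_left; apply Finset.mem_union_right
        rw [hQ2_def, hSeq]
        exact Finset.mem_image_of_mem _ (by rw [hmemA]; exact ⟨hc01, hlt⟩)
    · obtain ⟨a, b, hab, hT2⟩ := Finset.card_eq_two.mp hcd
      have hSeq : S = {y, a, b} := by rw [← hins, hT2]
      have haT : a ∈ S.erase y := by rw [hT2]; simp
      have hbT : b ∈ S.erase y := by rw [hT2]; simp
      by_cases hxT : x ∈ S.erase y
      · rcases (by rw [hT2] at hxT; simpa using hxT : x = a ∨ x = b) with hxa | hxb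
        · have hbAB : b ∈ A ∪ B := by
            rcases hclass b hbT with h | h
            · exact absurd (h.trans hxa).symm hab
            · exact h
          rw [hCs_def]
          apply Finset.mem_union_left; apply Finset.mem_union_right
          rw [hQ3_def]
          refine Finset.mem_image.mpr ⟨b, hbAB, ?_⟩
          rw [hSeq, hxa]
        · have haAB : a ∈ A ∪ B := by
            rcases hclass a haT with h | h
            · exact absurd (h.trans hxb) hab
            · exact h
          rw [hCs_def]
          apply Finset.mem_union_left; apply Finset.mem_union_right
          rw [hQ3_def]
          refine Finset.mem_image.mpr ⟨a, haAB, ?_⟩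
          rw [hSeq, hxb]
          ext e; simp only [Finset.mem_insert, Finset.mem_singleton]; tauto
      · have haAB := (hclass a haT).resolve_left (fun he => hxT (he ▸ haT))
        have hbAB := (hclass b hbT).resolve_left (fun he => hxT (he ▸ hbT))
        rw [hCs_def]
        apply Finset.mem_union_right
        rw [hQ4_def]
        refine Finset.mem_image.mpr ⟨S.erase y, ?_, by rw [hins]⟩
        rw [hT4_def, Finset.mem_sdiff]
        constructor
        · rw [Finset.mem_powersetCard]
          refine ⟨fun t ht => ?_, hcd⟩
          rw [hT2] at ht
          rcases Finset.mem_insert.mp ht with rfl | ht'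
          · exact haAB
          · rw [Finset.mem_singleton] at ht'; subst ht'; exact hbAB
        · intro hTB
          have hc0B := (Finset.mem_powersetCard.mp hTB).1 hc0T
          rw [hmemB] at hc0B
          exact absurd hc0B (not_lt.mpr hc02)
  -- quantitative bounds per piece
  have hD1 : 4 * (Multiset.card V : ℤ) ≤
      6 * ((Multiset.card (V.filter (fun v => topS r {y,x} ≠ topS v {y,x})) : ℤ)
        - (Multiset.card (V.filter (fun v => topS r' {y,x} ≠ topS v {y,x})) : ℤ)) := by
    have h1 := f_pair V r hyx hryx
    have h2 : Multiset.card (V.filter (fun v => topS r' {y,x} ≠ topS v {y,x}))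
        + votesBefore V x y = Multiset.card V := by
      rw [Finset.pair_comm y x]
      exact f_pair V r' (Ne.symm hyx) hbxy
    have h3 := vb_add V hyx
    have h4 := hb1
    push_cast
    omega
  have hD2 : ∀ z ∈ A, 2 * (Multiset.card V : ℤ) ≤
      6 * ((Multiset.card (V.filter (fun v => topS r {y,z} ≠ topS v {y,z})) : ℤ)
        - (Multiset.card (V.filter (fun v => topS r' {y,z} ≠ topS v {y,z})) : ℤ)) := by
    intro z hz
    obtain ⟨hzx', hzy, h6z⟩ := hAfacts z hz
    have hmz := (hmemA z).mp hz
    have h1 := f_pair V r (Ne.symm hzy) hmz.1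
    have h2 : Multiset.card (V.filter (fun v => topS r' {y,z} ≠ topS v {y,z}))
        + votesBefore V z y = Multiset.card V := by
      rw [Finset.pair_comm y z]
      exact f_pair V r' hzy (hbzy z hz)
    have h3 := vb_add V (Ne.symm hzy)
    have h4 : votesBefore V y z ≤ votesBefore V y x + votesBefore V x z := by
      unfold votesBefore
      exact cnt_le_or V _ _ _ (fun v hv => before_or v hyx hv)
    have h5 := hb1
    push_cast
    omega
  have hD3 : ∀ c ∈ A ∪ B, 3 * (Multiset.card V : ℤ) ≤
      6 * ((Multiset.card (V.filter (fun v => topS r {y,x,c} ≠ topS v {y,x,c})) : ℤ)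
        - (Multiset.card (V.filter (fun v => topS r' {y,x,c} ≠ topS v {y,x,c})) : ℤ)) := by
    intro c hc
    obtain ⟨hcx, hcy, hyc⟩ := hAB c hc
    have h1 := f_triple V r hyx (Ne.symm hcy) hryx hyc
    have hmono : Multiset.card (V.filter (fun v => Before v y x ∧ Before v y c))
        ≤ votesBefore V y x := by
      unfold votesBefore
      exact cnt_mono V _ _ (fun v hv => hv.1)
    have h5 := hb1
    rcases Finset.mem_union.mp hc with hcA | hcB
    · have h2 : Multiset.card (V.filter (fun v => topS r' {y,x,c} ≠ topS v {y,x,c}))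
          + Multiset.card (V.filter (fun v => Before v c y ∧ Before v c x))
          = Multiset.card V := by
        rw [(triple_rot : ({y,x,c} : Finset C) = {c,y,x})]
        exact f_triple V r' hcy hcx (hbzy c hcA) (hbzx c hcA)
      have h3 : Multiset.card V
          ≤ Multiset.card (V.filter (fun v => Before v c y ∧ Before v c x))
            + Multiset.card (V.filter (fun v => Before v x c))
            + Multiset.card (V.filter (fun v => Before v y x)) :=
        cnt_cover V _ _ _ (fun v => cover_trans v hcx hyx)
      have h4 : 6 * votesBefore V x c ≤ Multiset.card V := (hAfacts c hcA).2.2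
      unfold votesBefore at h4 h5
      push_cast
      omega
    · have h2 : Multiset.card (V.filter (fun v => topS r' {y,x,c} ≠ topS v {y,x,c}))
          + Multiset.card (V.filter (fun v => Before v x y ∧ Before v x c))
          = Multiset.card V := by
        rw [(triple_swap : ({y,x,c} : Finset C) = {x,y,c})]
        exact f_triple V r' (Ne.symm hyx) (Ne.symm hcx) hbxy (hbxw c hcB)
      have h3 : Multiset.card V
          ≤ Multiset.card (V.filter (fun v => Before v x y ∧ Before v x c))
            + Multiset.card (V.filter (fun v => Before v y x))
            + Multiset.card (V.filter (fun v => Before v c x)) :=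
        cnt_cover V _ _ _ (fun v => cover_plain v (Ne.symm hyx) (Ne.symm hcx))
      have h4 : 6 * votesBefore V c x ≤ Multiset.card V := (hBfacts c hcB).2.2.2
      unfold votesBefore at h4 h5
      push_cast
      omega
  have hD4 : ∀ T ∈ T4, (-2) * (Multiset.card V : ℤ) ≤
      6 * ((Multiset.card (V.filter (fun v => topS r (insert y T) ≠ topS v (insert y T))) : ℤ)
        - (Multiset.card (V.filter (fun v => topS r' (insert y T) ≠ topS v (insert y T))) : ℤ)) := by
    intro T hT
    obtain ⟨hc2, hsub, z0, hz0T, hz0A⟩ := hT4m T hT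
    obtain ⟨a, b, hab, rfl⟩ := Finset.card_eq_two.mp hc2
    have haAB : a ∈ A ∪ B := hsub (by simp)
    have hbAB : b ∈ A ∪ B := hsub (by simp)
    obtain ⟨hax, hay, hya⟩ := hAB a haAB
    obtain ⟨hbx, hby, hyb⟩ := hAB b hbAB
    have h1 := f_triple V r (Ne.symm hay) (Ne.symm hby) hya hyb
    have hgle : Multiset.card (V.filter
        (fun v => topS r' (insert y {a,b}) ≠ topS v (insert y {a,b}))) ≤ Multiset.card V :=
      Multiset.card_le_card (Multiset.filter_le _ _)
    have hz0ab : z0 = a ∨ z0 = b := by simpa using hz0T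
    have h5 := hb1
    have hbound : 6 * Multiset.card (V.filter (fun v => Before v y a ∧ Before v y b))
        ≤ 2 * Multiset.card V := by
      rcases hz0ab with rfl | rfl
      · have hm1 : Multiset.card (V.filter (fun v => Before v y z0 ∧ Before v y b))
            ≤ votesBefore V y z0 := by
          unfold votesBefore; exact cnt_mono V _ _ (fun v hv => hv.1)
        have hm2 : votesBefore V y z0 ≤ votesBefore V y x + votesBefore V x z0 := by
          unfold votesBefore
          exact cnt_le_or V _ _ _ (fun v hv => before_or v hyx hv)
        have h6 : 6 * votesBefore V x z0 ≤ Multiset.card V := (hAfacts z0 hz0A).2.2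
        omega
      · have hm1 : Multiset.card (V.filter (fun v => Before v y a ∧ Before v y z0))
            ≤ votesBefore V y z0 := by
          unfold votesBefore; exact cnt_mono V _ _ (fun v hv => hv.2)
        have hm2 : votesBefore V y z0 ≤ votesBefore V y x + votesBefore V x z0 := by
          unfold votesBefore
          exact cnt_le_or V _ _ _ (fun v hv => before_or v hyx hv)
        have h6 : 6 * votesBefore V x z0 ≤ Multiset.card V := (hAfacts z0 hz0A).2.2
        omega
    push_cast
    omega
  -- cardinalities
  have hABdisj : Disjoint A B := by
    rw [Finset.disjoint_left]
    intro c hcA hcB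
    exact absurd ((hmemB c).mp hcB) (not_lt.mpr (le_of_lt ((hmemA c).mp hcA).2))
  have hmpq : (A ∪ B).card = A.card + B.card := Finset.card_union_of_disjoint hABdisj
  have hm4 : (A ∪ B).card + 2 ≤ Fintype.card C := by
    have hsub2 : A ∪ B ⊆ univ \ {y, x} := by
      intro c hc
      obtain ⟨h1, h2, -⟩ := hAB c hc
      rw [Finset.mem_sdiff]
      exact ⟨Finset.mem_univ c, by simp [h1, h2]⟩
    have hle := Finset.card_le_card hsub2
    rw [Finset.card_sdiff_of_subset (Finset.subset_univ _), Finset.card_univ, Finset.card_pair hyx] at hle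
    have hc2 : 2 ≤ Fintype.card C := by
      have := Finset.card_le_card (Finset.subset_univ ({y,x} : Finset C))
      rw [Finset.card_pair hyx, Finset.card_univ] at this
      exact this
    omega
  have hk4 : T4.card + B.card.choose 2 = (A ∪ B).card.choose 2 := by
    rw [← Finset.card_powersetCard 2 B, ← Finset.card_powersetCard 2 (A ∪ B), hT4_def]
    exact Finset.card_sdiff_add_card_eq_card
      (Finset.powersetCard_mono Finset.subset_union_right)
  have harith : 2 * T4.card < 4 + 2 * A.card + 3 * (A ∪ B).card := by
    rw [hmpq] at hk4 hm4 ⊢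
    exact arith_aux A.card B.card T4.card (Fintype.card C) hk4 hm4 hn
  -- injectivity of the parametrizations
  have hinj2 : ∀ z1 ∈ A, ∀ z2 ∈ A, ({y,z1} : Finset C) = {y,z2} → z1 = z2 := by
    intro z1 h1 z2 h2 he
    have hz1y := (hAfacts z1 h1).2.1
    have hm : z1 ∈ ({y,z2} : Finset C) := he ▸ (by simp : z1 ∈ ({y,z1} : Finset C))
    rcases Finset.mem_insert.mp hm with h | h
    · exact absurd h hz1y
    · exact Finset.mem_singleton.mp h
  have hinj3 : ∀ c1 ∈ A ∪ B, ∀ c2 ∈ A ∪ B,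
      ({y,x,c1} : Finset C) = {y,x,c2} → c1 = c2 := by
    intro c1 h1 c2 h2 he
    obtain ⟨hc1x, hc1y, -⟩ := hAB c1 h1
    have hm : c1 ∈ ({y,x,c2} : Finset C) := he ▸ (by simp : c1 ∈ ({y,x,c1} : Finset C))
    rcases Finset.mem_insert.mp hm with h | h
    · exact absurd h hc1y
    rcases Finset.mem_insert.mp h with h | h
    · exact absurd h hc1x
    · exact Finset.mem_singleton.mp h
  have hinj4 : ∀ T1 ∈ T4, ∀ T2 ∈ T4, insert y T1 = insert y T2 → T1 = T2 := by
    intro T1 h1 T2 h2 he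
    have hy1 : y ∉ T1 := fun hm => (hAB y ((hT4m T1 h1).2.1 hm)).2.1 rfl
    have hy2 : y ∉ T2 := fun hm => (hAB y ((hT4m T2 h2).2.1 hm)).2.1 rfl
    rw [← Finset.erase_insert hy1, ← Finset.erase_insert hy2, he]
  -- disjointness
  have hd12 : Disjoint Q1 Q2 := by
    rw [Finset.disjoint_left]
    intro S h1 h2
    exact (hQ2m S h2).1 (hQ1m S h1).1
  have hd123 : Disjoint (Q1 ∪ Q2) Q3 := by
    rw [Finset.disjoint_left]
    intro S h1 h3
    have hc3 := (hQ3m S h3).2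
    rcases Finset.mem_union.mp h1 with h | h
    · rw [(hQ1m S h).2] at hc3; omega
    · rw [(hQ2m S h).2] at hc3; omega
  have hd1234 : Disjoint (Q1 ∪ Q2 ∪ Q3) Q4 := by
    rw [Finset.disjoint_left]
    intro S h1 h4
    obtain ⟨hx4, hc4⟩ := hQ4m S h4
    rcases Finset.mem_union.mp h1 with h | h
    · rcases Finset.mem_union.mp h with h | h
      · exact hx4 (hQ1m S h).1
      · have := (hQ2m S h).2; omega
    · exact hx4 (hQ3m S h).1
  -- the final comparison
  have hkey : kDistV 3 r' V < kDistV 3 r V := by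
    rw [kDistV_eq, kDistV_eq]
    rw [← Nat.cast_lt (α := ℤ), Nat.cast_sum, Nat.cast_sum]
    have hgoal : 0 < ∑ S ∈ (Finset.univ : Finset C).powerset.filter (fun S => S.card ≤ 3),
        ((Multiset.card (V.filter (fun v => topS r S ≠ topS v S)) : ℤ)
          - (Multiset.card (V.filter (fun v => topS r' S ≠ topS v S)) : ℤ)) := by
      have hzero : ∀ S ∈ (Finset.univ : Finset C).powerset.filter (fun S => S.card ≤ 3),
          S ∉ Cs → ((Multiset.card (V.filter (fun v => topS r S ≠ topS v S)) : ℤ)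
            - (Multiset.card (V.filter (fun v => topS r' S ≠ topS v S)) : ℤ)) = 0 := by
        intro S h1 h2
        have htop : topS r' S = topS r S := by
          by_contra hne
          exact h2 (hchanged S h1 hne)
        have heq : Multiset.card (V.filter (fun v => topS r' S ≠ topS v S))
            = Multiset.card (V.filter (fun v => topS r S ≠ topS v S)) :=
          cnt_congr V _ _ (fun v => by rw [htop])
        rw [heq]; omega
      rw [← Finset.sum_subset hCsub hzero]
      rw [hCs_def, Finset.sum_union hd1234, Finset.sum_union hd123, Finset.sum_union hd12]
      rw [hQ1_def, Finset.sum_singleton, hQ2_def, Finset.sum_image hinj2,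
        hQ3_def, Finset.sum_image hinj3, hQ4_def, Finset.sum_image hinj4]
      have hnZ : (0:ℤ) < (Multiset.card V : ℤ) := by exact_mod_cast hnpos
      have hb2 : (A.card : ℤ) * (2 * (Multiset.card V : ℤ)) ≤
          ∑ z ∈ A, 6 * ((Multiset.card (V.filter (fun v => topS r {y,z} ≠ topS v {y,z})) : ℤ)
            - (Multiset.card (V.filter (fun v => topS r' {y,z} ≠ topS v {y,z})) : ℤ)) := by
        have := Finset.card_nsmul_le_sum A _ _ hD2
        rwa [nsmul_eq_mul] at this
      have hb3 : ((A ∪ B).card : ℤ) * (3 * (Multiset.card V : ℤ)) ≤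
          ∑ c ∈ A ∪ B, 6 * ((Multiset.card (V.filter (fun v => topS r {y,x,c} ≠ topS v {y,x,c})) : ℤ)
            - (Multiset.card (V.filter (fun v => topS r' {y,x,c} ≠ topS v {y,x,c})) : ℤ)) := by
        have := Finset.card_nsmul_le_sum (A ∪ B) _ _ hD3
        rwa [nsmul_eq_mul] at this
      have hb4 : (T4.card : ℤ) * ((-2) * (Multiset.card V : ℤ)) ≤
          ∑ T ∈ T4, 6 * ((Multiset.card (V.filter (fun v => topS r (insert y T) ≠ topS v (insert y T))) : ℤ)
            - (Multiset.card (V.filter (fun v => topS r' (insert y T) ≠ topS v (insert y T))) : ℤ)) := by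
        have := Finset.card_nsmul_le_sum T4 _ _ hD4
        rwa [nsmul_eq_mul] at this
      rw [← Finset.mul_sum] at hb2 hb3 hb4
      have hfac : (0:ℤ) ≤ (Multiset.card V : ℤ) *
          (3 + 2 * (A.card : ℤ) + 3 * ((A ∪ B).card : ℤ) - 2 * (T4.card : ℤ)) := by
        apply mul_nonneg (le_of_lt hnZ)
        have : (2 * T4.card : ℤ) ≤ 3 + 2 * (A.card : ℤ) + 3 * ((A ∪ B).card : ℤ) := by
          exact_mod_cast (by omega : 2 * T4.card ≤ 3 + 2 * A.card + 3 * (A ∪ B).card)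
        linarith
      have hexp : (Multiset.card V : ℤ) *
            (3 + 2 * (A.card : ℤ) + 3 * ((A ∪ B).card : ℤ) - 2 * (T4.card : ℤ))
          = 3 * (Multiset.card V : ℤ) + (A.card : ℤ) * (2 * (Multiset.card V : ℤ))
            + ((A ∪ B).card : ℤ) * (3 * (Multiset.card V : ℤ))
            + (T4.card : ℤ) * ((-2) * (Multiset.card V : ℤ)) := by ring
      linarith [hD1, hb2, hb3, hb4]
    rw [Finset.sum_sub_distrib] at hgoal
    linarith
  exact absurd (hr r') (not_le.mpr hkey)
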